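/- Let L be the Laplacian of a weighted digraph G on N nodes and i_R an index. If there exists a positive diagonal matrix D such that M_D + M_D^T > 0 (positive definite), where M_D = D(L + e_{i_R} e_{i_R}^T), then rank(L) ≥ N − 1. -/

import Mathlib

open Matrix

lemma matrix_rank_add_le {N : ℕ} (A B : Matrix (Fin N) (Fin N) ℝ) :
    (A + B).rank ≤ A.rank + B.rank := by
  have hr : LinearMap.range (A + B).mulVecLin ≤
      LinearMap.range A.mulVecLin ⊔ LinearMap.range B.mulVecLin := by
    rintro y ⟨x, rfl⟩
    exact Submodule.mem_sup.2 ⟨A *ᵥ x, ⟨x, rfl⟩, B *ᵥ x, ⟨x, rfl⟩, by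
      simp [Matrix.add_mulVec]⟩
  calc (A + B).rank ≤ Module.finrank ℝ
        (LinearMap.range A.mulVecLin ⊔ LinearMap.range B.mulVecLin : Submodule ℝ (Fin N → ℝ)) :=
        Submodule.finrank_mono hr
    _ ≤ A.rank + B.rank := Submodule.finrank_add_le_finrank_add_finrank _ _

lemma rank_std_le {N : ℕ} (iR : Fin N) :
    (Matrix.single iR iR (1 : ℝ)).rank ≤ 1 := by
  have hEq : Matrix.single iR iR (1 : ℝ) =
      (Matrix.of fun i (_ : Fin 1) => if i = iR then (1:ℝ) else 0) *
        (Matrix.of fun (_ : Fin 1) j => if j = iR then (1:ℝ) else 0) := by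
    ext i j
    simp only [Matrix.single, Matrix.of_apply, Matrix.mul_apply, Fin.sum_univ_one]
    by_cases hi : i = iR <;> by_cases hj : j = iR <;> simp [hi, hj, Ne.symm]
  rw [hEq]
  exact (Matrix.rank_mul_le_left _ _).trans
    ((Matrix.rank_le_card_width _).trans (by simp))

/-- If there is a positive diagonal D with M_D + M_Dᵀ positive definite,
where M_D = D(L + e_{iR} e_{iR}ᵀ) and L is a graph Laplacian, then rank L ≥ N - 1. -/
theorem stmt1 {N : ℕ} (L : Matrix (Fin N) (Fin N) ℝ)
    (hrowsum : L *ᵥ (fun _ => (1 : ℝ)) = 0)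
    (hoff : ∀ i j, i ≠ j → L i j ≤ 0)
    (iR : Fin N)
    (h : ∃ d : Fin N → ℝ, (∀ i, 0 < d i) ∧
      ((Matrix.diagonal d * (L + Matrix.single iR iR 1)) +
        (Matrix.diagonal d * (L + Matrix.single iR iR 1))ᵀ).PosDef) :
    N - 1 ≤ L.rank := by
  obtain ⟨d, hd, hpd⟩ := h
  set E := Matrix.single iR iR (1 : ℝ) with hE
  set M := Matrix.diagonal d * (L + E) with hM
  have hker : ∀ x, (L + E) *ᵥ x = 0 → x = 0 := by
    intro x hx
    by_contra hxne
    have hz : M *ᵥ x = 0 := by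
      rw [hM, ← Matrix.mulVec_mulVec, hx, Matrix.mulVec_zero]
    have hq : x ⬝ᵥ ((M + Mᵀ) *ᵥ x) = 0 := by
      rw [Matrix.add_mulVec, hz, zero_add, Matrix.mulVec_transpose,
        dotProduct_comm, ← Matrix.dotProduct_mulVec, hz, dotProduct_zero]
    have := hpd.dotProduct_mulVec_pos hxne
    simp only [star_trivial] at this
    rw [hq] at this
    exact lt_irrefl _ this
  have hinj : Function.Injective ((L + E).mulVec) := by
    intro a b hab
    have h0 : (L + E) *ᵥ (a - b) = 0 := by rw [Matrix.mulVec_sub, hab, sub_self]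
    exact sub_eq_zero.mp (hker _ h0)
  have hu : IsUnit (L + E) := Matrix.mulVec_injective_iff_isUnit.mp hinj
  have hrk : (L + E).rank = N := by
    rw [Matrix.rank_of_isUnit _ hu, Fintype.card_fin]
  have h1 : N ≤ L.rank + 1 := by
    calc N = (L + E).rank := hrk.symm
      _ ≤ L.rank + E.rank := matrix_rank_add_le L E
      _ ≤ L.rank + 1 := add_le_add_right (rank_std_le iR) L.rank
  omega
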